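/- Let G be a bipartite graph with maximum matching M and minimum vertex cover U (so |M| = |U| by König's theorem), with every edge of M containing exactly one vertex of U. Construct E′ by starting with M and, for each vertex v not covered by M, adding one edge {u, v} ∈ E with u ∈ U (such u always exists). Then H = (V, E′) is a star forest of G in which the centers are exactly the vertices of U that have degree ≥ 1 in H, and the independent set I = V ∖ U is exactly the set of leaves. -/

import Mathlib

/-- The graph determined by a "center" assignment: each non-fixed vertex `v` is joined
exactly to its center `c v`. -/
def forestGraph {V : Type*} (c : V → V) : SimpleGraph V where
  Adj v w := v ≠ w ∧ (c v = w ∨ c w = v)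
  symm := by constructor; intro v w h; exact ⟨Ne.symm h.1, h.2.symm⟩
  loopless := by constructor; intro v h; exact h.1 rfl

/-- A star forest of `G`: a spanning subgraph of `G` each of whose components is a star
`K_{1,ℓ}` with `ℓ ≥ 1`, encoded by assigning to every vertex the center of its star
(centers are fixed points; every star has at least one leaf). -/
structure StarForest {V : Type*} (G : SimpleGraph V) where
  center : V → V
  idem : ∀ v, center (center v) = center v
  sub : forestGraph center ≤ G
  spanning : ∀ v, center v = v → ∃ w, center w = v ∧ w ≠ v

/-- The leaves of a star forest. -/
def StarForest.leaves {V : Type*} {G : SimpleGraph V} (F : StarForest G) : Set V :=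
  {v | F.center v ≠ v}

/-- The number of vertices of the star with center `c` (so a star `S_ℓ` has size `ℓ+1`). -/
noncomputable def StarForest.size {V : Type*} {G : SimpleGraph V} (F : StarForest G)
    (c : V) : ℕ :=
  Set.ncard {v | F.center v = c}

/-- An alternating path visiting the distinct stars `C_1, …, C_k` of the star forest `F`:
`c i` is the center of `C_i` and, for `2 ≤ i ≤ k`, `lf i` is a leaf of `C_i`; consecutive
stars are joined by a `G`-edge from the center of `C_i` to the leaf `lf (i+1)` of
`C_{i+1}` that is not a forest edge, while the edges from each `lf i` to its center `c i`
are forest edges. -/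
structure AltPath {V : Type*} {G : SimpleGraph V} (F : StarForest G) (k : ℕ) where
  c : ℕ → V
  lf : ℕ → V
  hk : 2 ≤ k
  hc : ∀ i, 1 ≤ i → i ≤ k → F.center (c i) = c i
  hinj : ∀ i j, 1 ≤ i → i ≤ k → 1 ≤ j → j ≤ k → c i = c j → i = j
  hlf : ∀ i, 2 ≤ i → i ≤ k → F.center (lf i) = c i ∧ lf i ≠ c i
  hG : ∀ i, 1 ≤ i → i < k → G.Adj (c i) (lf (i + 1))
  hnotF : ∀ i, 1 ≤ i → i < k → ¬ (forestGraph F.center).Adj (c i) (lf (i + 1))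

/-- The edge set of an alternating path: the forest edges `{lf i, c i}` (`2 ≤ i ≤ k`)
and the non-forest edges `{c i, lf (i+1)}` (`1 ≤ i ≤ k−1`). -/
def AltPath.edges {V : Type*} {G : SimpleGraph V} {F : StarForest G} {k : ℕ}
    (P : AltPath F k) : Set (Sym2 V) :=
  {e | ∃ i, 2 ≤ i ∧ i ≤ k ∧ e = s(P.lf i, P.c i)} ∪
  {e | ∃ i, 1 ≤ i ∧ i < k ∧ e = s(P.c i, P.lf (i + 1))}

/-- Alternating path of type II: `C_1 ≅ S_1`, intermediate stars `≅ S_2`, and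
`C_k ≅ S_ℓ` with `ℓ ≥ 3`. -/
def AltPath.IsTypeII {V : Type*} {G : SimpleGraph V} {F : StarForest G} {k : ℕ}
    (P : AltPath F k) : Prop :=
  F.size (P.c 1) = 2 ∧ (∀ i, 2 ≤ i → i < k → F.size (P.c i) = 3) ∧ 4 ≤ F.size (P.c k)

/-- Alternating path of type III: `C_1 ≅ S_2`, intermediate stars `≅ S_3`, and
`C_k ≅ S_ℓ` with `ℓ ≥ 4`. -/
def AltPath.IsTypeIII {V : Type*} {G : SimpleGraph V} {F : StarForest G} {k : ℕ}
    (P : AltPath F k) : Prop :=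
  F.size (P.c 1) = 3 ∧ (∀ i, 2 ≤ i → i < k → F.size (P.c i) = 4) ∧ 5 ≤ F.size (P.c k)

/-- Phase 1 of the decomposition algorithm: let `G` be bipartite with maximum matching
`M` and minimum vertex cover `U` (with `|M| = |U|` by Kőnig's theorem and every matching
edge containing exactly one vertex of `U`).  Extending `M` by one edge `{u,v}` with
`u ∈ U` for each vertex `v` uncovered by `M` yields an edge set `E'` such that
`H = (V, E')` is a star forest of `G` whose centers are exactly the vertices of `U`
incident to an edge of `E'` and whose leaves are exactly the maximum independent set
`I = V ∖ U`. -/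
theorem phase1_star_forest {V : Type*} [Fintype V] (G : SimpleGraph V)
    (hbip : G.Colorable 2)
    (M : Set (Sym2 V)) (U : Set V) (E' : Set (Sym2 V))
    (hME : M ⊆ G.edgeSet)
    (hmatch : M.Pairwise fun e f => ∀ v, v ∈ e → v ∉ f)
    (hMmax : ∀ M' ⊆ G.edgeSet,
      (M'.Pairwise fun e f => ∀ v, v ∈ e → v ∉ f) → M'.ncard ≤ M.ncard)
    (hUcov : ∀ e ∈ G.edgeSet, ∃ v ∈ U, v ∈ e)
    (hUmin : ∀ U' : Set V, (∀ e ∈ G.edgeSet, ∃ v ∈ U', v ∈ e) → U.ncard ≤ U'.ncard)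
    (hkonig : M.ncard = U.ncard)
    (hone : ∀ e ∈ M, ∃! v, v ∈ U ∧ v ∈ e)
    (hME' : M ⊆ E') (hE'G : E' ⊆ G.edgeSet)
    (hnew : ∀ e ∈ E' \ M, ∃ u v, u ∈ U ∧ (∀ f ∈ M, v ∉ f) ∧ e = s(u, v))
    (hcov' : ∀ v : V, (∀ f ∈ M, v ∉ f) → ∃! e, e ∈ E' \ M ∧ v ∈ e) :
    ∃ F : StarForest G,
      (forestGraph F.center).edgeSet = E' ∧
      {v | F.center v = v} = {u ∈ U | ∃ e ∈ E', u ∈ e} ∧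
      F.leaves = (Uᶜ : Set V) := by
  classical
  -- every vertex of U lies in a matching edge
  have hgex : ∀ e ∈ M, ∃ v, v ∈ U ∧ v ∈ e := fun e he => (hone e he).exists
  have hcovU : ∀ u ∈ U, ∃ e ∈ M, u ∈ e := by
    set g : Sym2 V → V := fun e =>
      if h : ∃ v, v ∈ U ∧ v ∈ e then h.choose else (Quot.out e).1 with hg
    have hgspec : ∀ e ∈ M, g e ∈ U ∧ g e ∈ e := by
      intro e he
      have h := hgex e he
      simp only [hg, dif_pos h]
      exact h.choose_spec
    have hinj : Set.InjOn g M := by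
      intro e he f hf hef
      by_contra hne
      exact (hmatch he hf hne) (g e) (hgspec e he).2 (hef ▸ (hgspec f hf).2)
    have himg : g '' M ⊆ U := by rintro _ ⟨e, he, rfl⟩; exact (hgspec e he).1
    have hcard : (g '' M).ncard = U.ncard := by
      rw [Set.ncard_image_of_injOn hinj, hkonig]
    have heq : g '' M = U := Set.eq_of_subset_of_ncard_le himg hcard.ge
    intro u hu
    rw [← heq] at hu
    obtain ⟨e, he, rfl⟩ := hu
    exact ⟨e, he, (hgspec e he).2⟩
  have huncov : ∀ v ∉ U, ∀ e ∈ E' \ M, v ∈ e →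
      (∀ f ∈ M, v ∉ f) ∧ ∃ u ∈ U, e = s(u, v) := by
    intro v hv e he hve
    obtain ⟨u, w, hu, hw, rfl⟩ := hnew e he
    rcases Sym2.mem_iff.mp hve with rfl | rfl
    · exact absurd hu hv
    · exact ⟨hw, u, hu, rfl⟩
  have hE'form : ∀ e ∈ E', ∃ u v, u ∈ U ∧ v ∉ U ∧ e = s(u, v) := by
    intro e he
    by_cases hm : e ∈ M
    · obtain ⟨u, ⟨hu, hue⟩, huu⟩ := hone e hm
      have hne : e ∈ G.edgeSet := hME hm
      have hother := Sym2.other_spec hue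
      have hwe : Sym2.Mem.other hue ∈ e := Sym2.other_mem hue
      have hwu : Sym2.Mem.other hue ≠ u := by
        intro h
        rw [← hother, h] at hne
        exact G.irrefl ((SimpleGraph.mem_edgeSet G).mp hne)
      have hwU : Sym2.Mem.other hue ∉ U := fun hwU => hwu (huu _ ⟨hwU, hwe⟩)
      exact ⟨u, Sym2.Mem.other hue, hu, hwU, hother.symm⟩
    · obtain ⟨u, w, hu, hw, rfl⟩ := hnew e ⟨he, hm⟩
      have hwU : w ∉ U := by
        intro hwU
        obtain ⟨f, hf, hwf⟩ := hcovU w hwU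
        exact hw f hf hwf
      exact ⟨u, w, hu, hwU, rfl⟩
  have huniq : ∀ v ∉ U, ∃! u, u ∈ U ∧ s(u, v) ∈ E' := by
    intro v hv
    by_cases hcov : ∀ f ∈ M, v ∉ f
    · obtain ⟨⟨heE, hve⟩, hequ⟩ := hcov' v hcov
      obtain ⟨e, ⟨heE', hve'⟩, _⟩ := hcov' v hcov
      obtain ⟨_, u, hu, hef⟩ := huncov v hv e heE' hve'
      refine ⟨u, ⟨hu, hef ▸ heE'.1⟩, ?_⟩
      rintro u' ⟨hu', he'⟩
      have h1 : s(u', v) ∈ E' \ M := by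
        refine ⟨he', fun hm => ?_⟩
        exact hcov _ hm (Sym2.mem_mk_right u' v)
      have h2 := ExistsUnique.unique (hcov' v hcov)
        ⟨h1, Sym2.mem_mk_right u' v⟩ ⟨heE', hve'⟩
      rw [hef] at h2
      rcases Sym2.eq_iff.mp h2 with ⟨h3, _⟩ | ⟨h3, _⟩
      · exact h3
      · exact absurd (h3 ▸ hu') hv
    · push_neg at hcov
      obtain ⟨f, hf, hvf⟩ := hcov
      obtain ⟨u, ⟨hu, huf⟩, hufu⟩ := hone f hf
      have huv : u ≠ v := fun h => hv (h ▸ hu)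
      have hfeq : f = s(u, v) := by
        have hsp := Sym2.other_spec hvf
        rcases Sym2.mem_iff.mp (hsp ▸ huf) with h | h
        · exact absurd h huv
        · rw [← hsp, ← h, Sym2.eq_swap]
      refine ⟨u, ⟨hu, hME' (hfeq ▸ hf)⟩, ?_⟩
      rintro u' ⟨hu', he'⟩
      have hm : s(u', v) ∈ M := by
        by_contra hm
        exact (huncov v hv _ ⟨he', hm⟩ (Sym2.mem_mk_right u' v)).1 f hf hvf
      have hfm : s(u', v) = f := by
        by_contra hne
        exact (hmatch hm hf hne) v (Sym2.mem_mk_right u' v) hvf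
      rw [hfeq] at hfm
      rcases Sym2.eq_iff.mp hfm with ⟨h3, _⟩ | ⟨h3, _⟩
      · exact h3
      · exact absurd (h3 ▸ hu') hv
  set c : V → V := fun v => if h : v ∈ U then v else (huniq v h).choose with hc
  have hcU : ∀ v ∈ U, c v = v := fun v hv => dif_pos hv
  have hcN : ∀ v, v ∉ U → c v ∈ U ∧ s(c v, v) ∈ E' := by
    intro v hv
    simp only [hc, dif_neg hv]
    exact (huniq v hv).choose_spec.1
  have hcu : ∀ v, v ∉ U → ∀ u, u ∈ U → s(u, v) ∈ E' → c v = u := by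
    intro v hv u hu he
    simp only [hc, dif_neg hv]
    exact ((huniq v hv).choose_spec.2 u ⟨hu, he⟩).symm
  refine ⟨⟨c, ?_, ?_, ?_⟩, ?_, ?_, ?_⟩
  · -- idem
    intro v
    by_cases hv : v ∈ U
    · rw [hcU v hv, hcU v hv]
    · exact hcU _ (hcN v hv).1
  · -- sub
    intro a b hab
    obtain ⟨hne, h | h⟩ := hab
    · have haU : a ∉ U := fun haU => hne ((hcU a haU).symm.trans h)
      have h2 := (hcN a haU).2
      rw [h] at h2
      exact ((SimpleGraph.mem_edgeSet G).mp (hE'G h2)).symm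
    · have hbU : b ∉ U := fun hbU => hne (h.symm.trans (hcU b hbU))
      have h2 := (hcN b hbU).2
      rw [h] at h2
      exact (SimpleGraph.mem_edgeSet G).mp (hE'G h2)
  · -- spanning
    intro v hv
    have hvU : v ∈ U := by
      by_contra hvU
      exact hvU (hv ▸ (hcN v hvU).1)
    obtain ⟨e, he, hve⟩ := hcovU v hvU
    obtain ⟨u, w, hu, hwU, rfl⟩ := hE'form e (hME' he)
    rcases Sym2.mem_iff.mp hve with rfl | rfl
    · exact ⟨w, hcu w hwU v hvU (hME' he), fun h => hwU (h ▸ hvU)⟩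
    · exact absurd hvU hwU
  · -- edge set
    ext e
    induction e using Sym2.ind with
    | _ a b =>
      rw [SimpleGraph.mem_edgeSet]
      constructor
      · rintro ⟨hne, h | h⟩
        · have h' : c a = b := h
          have haU : a ∉ U := fun haU => hne ((hcU a haU).symm.trans h')
          have h2 := (hcN a haU).2
          rw [h'] at h2
          rwa [Sym2.eq_swap] at h2
        · have h' : c b = a := h
          have hbU : b ∉ U := fun hbU => hne (h'.symm.trans (hcU b hbU))
          have h2 := (hcN b hbU).2
          rw [h'] at h2
          exact h2
      · intro he
        obtain ⟨u, w, hu, hwU, hwe⟩ := hE'form _ he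
        have hcw : c w = u := hcu w hwU u hu (hwe ▸ he)
        rcases Sym2.eq_iff.mp hwe with ⟨rfl, rfl⟩ | ⟨rfl, rfl⟩
        · exact ⟨fun h => hwU (h ▸ hu), Or.inr hcw⟩
        · exact ⟨fun h => hwU (h.symm ▸ hu), Or.inl hcw⟩
  · -- fixed points
    have hfix : {v | c v = v} = U := by
      ext v
      simp only [Set.mem_setOf_eq]
      constructor
      · intro hv
        by_contra hvU
        exact hvU (hv ▸ (hcN v hvU).1)
      · exact hcU v
    show {v | c v = v} = _
    rw [hfix]
    ext u
    simp only [Set.mem_setOf_eq]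
    constructor
    · intro hu
      obtain ⟨e, he, hue⟩ := hcovU u hu
      exact ⟨hu, e, hME' he, hue⟩
    · exact fun h => h.1
  · -- leaves
    ext v
    simp only [StarForest.leaves, Set.mem_setOf_eq, Set.mem_compl_iff]
    constructor
    · intro h hv
      exact h (hcU v hv)
    · intro hv h
      exact hv (h ▸ (hcN v hv).1)
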